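/- Let (Σ', R) be a digraph with Σ' finite and nonempty that is strongly connected (every vertex is reachable from every vertex) and in which every vertex is flexible. Then for all a, b ∈ Σ' and every integer ℓ ≥ (max over σ ∈ Σ' of flex(σ)) + |Σ'|, there is a walk of length exactly ℓ from a to b. -/

import Mathlib

/-- A walk of length `k` from `a` to `b` in the digraph with edge relation `R`. -/
def IsWalk {V : Type*} (R : V → V → Prop) (k : ℕ) (f : ℕ → V) (a b : V) : Prop :=
  f 0 = a ∧ f k = b ∧ ∀ i < k, R (f i) (f (i + 1))

/-- `b` is reachable from `a`: there is a walk of some length `k ≥ 0` from `a` to `b`. -/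
def Reach {V : Type*} (R : V → V → Prop) (a b : V) : Prop :=
  ∃ (k : ℕ) (f : ℕ → V), IsWalk R k f a b

/-- A vertex `a` is flexible: there is `K` such that for every `k ≥ K` there is a
walk of length exactly `k` from `a` to `a`. -/
def Flexible {V : Type*} (R : V → V → Prop) (a : V) : Prop :=
  ∃ K : ℕ, ∀ k ≥ K, ∃ f : ℕ → V, IsWalk R k f a a

/-- The flexibility of `a`: the least `K` such that for every `k ≥ K` there is a
walk of length exactly `k` from `a` to `a`. -/
noncomputable def flex {V : Type*} (R : V → V → Prop) (a : V) : ℕ :=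
  sInf {K : ℕ | ∀ k ≥ K, ∃ f : ℕ → V, IsWalk R k f a a}

/-- Concatenate a walk of length `m` from `a` to `c` with a walk of length `d`
from `c` to `b`. -/
lemma walk_concat {V : Type*} {R : V → V → Prop} {m d : ℕ} {g h : ℕ → V} {a c b : V}
    (hg : IsWalk R m g a c) (hh : IsWalk R d h c b) :
    ∃ f : ℕ → V, IsWalk R (m + d) f a b := by
  obtain ⟨hg0, hgm, hge⟩ := hg
  obtain ⟨hh0, hhd, hhe⟩ := hh
  refine ⟨fun n => if n ≤ m then g n else h (n - m), ?_, ?_, ?_⟩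
  · simp [hg0]
  · rcases Nat.eq_zero_or_pos d with hd | hd
    · subst hd
      simp only [Nat.add_zero, if_pos le_rfl, hgm]
      rw [← hh0, hhd]
    · have : ¬ (m + d ≤ m) := by omega
      simp [this, Nat.add_sub_cancel_left, hhd]
  · intro i hi
    by_cases h1 : i + 1 ≤ m
    · have h2 : i ≤ m := by omega
      simp only [h1, h2, if_pos]
      exact hge i (by omega)
    · by_cases h2 : i ≤ m
      · have him : i = m := by omega
        have hd : 0 < d := by omega
        simp only [h1, h2, if_pos, if_neg]
        have : h (i + 1 - m) = h 1 := by rw [him]; norm_num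
        rw [this, him, hgm, ← hh0]
        exact hhe 0 hd
      · simp only [h1, h2, if_neg]
        have : i + 1 - m = (i - m) + 1 := by omega
        rw [this]
        exact hhe (i - m) (by omega)

/-- From reachability, get a walk of length strictly less than the number of vertices. -/
lemma exists_short_walk {V : Type*} [Fintype V] {R : V → V → Prop} {a b : V}
    (hab : Reach R a b) : ∃ d < Fintype.card V, ∃ f : ℕ → V, IsWalk R d f a b := by
  set S : Set ℕ := {k | ∃ f : ℕ → V, IsWalk R k f a b} with hS
  have hne : S.Nonempty := by obtain ⟨k, f, hf⟩ := hab; exact ⟨k, f, hf⟩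
  set d := sInf S with hd
  obtain ⟨f, hf0, hfd, hfe⟩ := Nat.sInf_mem hne
  refine ⟨d, ?_, f, hf0, hfd, hfe⟩
  by_contra hge
  push_neg at hge
  -- pigeonhole: f on {0,...,d} is not injective
  have : ¬ Function.Injective (fun n : Fin (d + 1) => f n) := by
    intro hinj
    have := Fintype.card_le_of_injective _ hinj
    simp at this
    omega
  rw [Function.not_injective_iff] at this
  obtain ⟨i, j, hfij, hij⟩ := this
  wlog hlt : (i : ℕ) < (j : ℕ) generalizing i j
  · have hne : (i : ℕ) ≠ (j : ℕ) := fun h => hij (Fin.ext h)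
    exact this j i hfij.symm hij.symm (by omega)
  · -- shorten the walk
    set e := (j : ℕ) - (i : ℕ) with he
    have he1 : 1 ≤ e := by omega
    have hjd : (j : ℕ) ≤ d := by omega
    have hmem : d - e ∈ S := by
      refine ⟨fun n => if n < (i : ℕ) then f n else f (n + e), ?_, ?_, ?_⟩
      · by_cases h0 : 0 < (i : ℕ)
        · simp [h0, hf0]
        · have hi0 : (i : ℕ) = 0 := by omega
          have : (0 : ℕ) + e = (j : ℕ) := by omega
          simp only [if_neg (by omega : ¬ (0 : ℕ) < (i : ℕ)), this]
          rw [← hfij]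
          simp [hi0, hf0]
      · have h1 : ¬ (d - e < (i : ℕ)) := by omega
        have h2 : d - e + e = d := by omega
        simp [h1, h2, hfd]
        rw [hd]; exact hfd
      · intro n hn
        by_cases h1 : n + 1 < (i : ℕ)
        · have h2 : n < (i : ℕ) := by omega
          simp only [h1, h2, if_pos]
          exact hfe n (by omega)
        · by_cases h2 : n < (i : ℕ)
          · have hni : n + 1 = (i : ℕ) := by omega
            simp only [h1, h2, if_pos, if_neg]
            have : f (n + 1 + e) = f (i : ℕ) := by
              rw [hni]
              have : (i : ℕ) + e = (j : ℕ) := by omega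
              rw [this]; exact hfij.symm
            rw [this, ← hni]
            exact hfe n (by omega)
          · simp only [h1, h2, if_neg]
            have : n + 1 + e = (n + e) + 1 := by omega
            rw [this]
            exact hfe (n + e) (by omega)
    have := Nat.sInf_le hmem
    omega


/-- in a finite nonempty strongly connected digraph in which every
vertex is flexible, for all vertices `a, b` and every
`ℓ ≥ max_σ flex(σ) + |Σ'|` there is a walk of length exactly `ℓ` from `a` to `b`. -/
theorem stmt5 {V : Type*} [Fintype V] [Nonempty V] (R : V → V → Prop)
    (hconn : ∀ a b : V, Reach R a b)
    (hflex : ∀ a : V, Flexible R a)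
    (a b : V) (ℓ : ℕ)
    (hℓ : (Finset.univ.sup fun σ : V => flex R σ) + Fintype.card V ≤ ℓ) :
    ∃ f : ℕ → V, IsWalk R ℓ f a b := by
  obtain ⟨d, hd, h, hh⟩ := exists_short_walk (hconn a b)
  have hsup : flex R a ≤ Finset.univ.sup fun σ : V => flex R σ :=
    Finset.le_sup (Finset.mem_univ a)
  have hflexset : (flex R a) ∈ {K : ℕ | ∀ k ≥ K, ∃ f : ℕ → V, IsWalk R k f a a} := by
    apply Nat.sInf_mem
    obtain ⟨K, hK⟩ := hflex a
    exact ⟨K, hK⟩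
  have hm : flex R a ≤ ℓ - d := by omega
  obtain ⟨g, hg⟩ := hflexset (ℓ - d) hm
  have : (ℓ - d) + d = ℓ := by omega
  rw [← this]
  exact walk_concat hg hh
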